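/- Let H be the real quaternions, and f(z), p(z) ∈ H[z] standard polynomials with f(z) = p(z)·(z - a) for some a ∈ H. If z₀ ≠ a is a root of f, then b := (z₀ - a) z₀ (z₀ - a)⁻¹ is a root of p, and z₀ satisfies the quadratic relation z₀² - (a + b) z₀ + b a = 0. -/
import Mathlib

lemma wedderburn_aux (a z₀ b : Quaternion ℝ)
    (hb : b * (z₀ - a) = (z₀ - a) * z₀) (p : Polynomial (Quaternion ℝ)) :
    Polynomial.eval z₀ (p * (Polynomial.X - Polynomial.C a))
      = Polynomial.eval b p * (z₀ - a) := by
  have hpow : ∀ n : ℕ, b ^ n * (z₀ - a) = (z₀ - a) * z₀ ^ n := by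
    intro n
    induction n with
    | zero => simp
    | succ k ih =>
      rw [pow_succ, mul_assoc, hb, ← mul_assoc, ih, mul_assoc, ← pow_succ]
  induction p using Polynomial.induction_on' with
  | add p q hp hq => simp [add_mul, hp, hq, add_mul]
  | monomial n c =>
    simp only [mul_sub, Polynomial.eval_sub, Polynomial.eval_mul_X,
      Polynomial.eval_monomial, Polynomial.monomial_mul_C]
    have h3 : c * b ^ n * z₀ - c * b ^ n * a = c * (b ^ n * (z₀ - a)) := by
      noncomm_ring
    rw [h3, hpow n]
    noncomm_ring
    rw [← pow_succ, ← pow_succ', add_comm]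

/-- Wedderburn's factorization observation: if `f(z) = p(z)(z - a)` in the ring of
standard quaternion polynomials and `z₀ ≠ a` is a root of `f`, then
`b = (z₀-a) z₀ (z₀-a)⁻¹` is a root of `p` and `z₀² - (a+b) z₀ + b a = 0`. -/
theorem wedderburn_factorization_root
    (f p : Polynomial (Quaternion ℝ)) (a : Quaternion ℝ)
    (hf : f = p * (Polynomial.X - Polynomial.C a))
    (z₀ : Quaternion ℝ) (hz : z₀ ≠ a) (hroot : Polynomial.eval z₀ f = 0) :
    Polynomial.eval ((z₀ - a) * z₀ * (z₀ - a)⁻¹) p = 0 ∧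
    z₀ ^ 2 - (a + (z₀ - a) * z₀ * (z₀ - a)⁻¹) * z₀ + ((z₀ - a) * z₀ * (z₀ - a)⁻¹) * a
      = 0 := by
  set b := (z₀ - a) * z₀ * (z₀ - a)⁻¹ with hbdef
  have hu : z₀ - a ≠ 0 := sub_ne_zero.mpr hz
  have hb : b * (z₀ - a) = (z₀ - a) * z₀ := by
    rw [hbdef, mul_assoc, inv_mul_cancel₀ hu, mul_one]
  have key := wedderburn_aux a z₀ b hb p
  rw [← hf, hroot] at key
  have h1 : Polynomial.eval b p = 0 := by
    rcases mul_eq_zero.mp key.symm with h | h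
    · exact h
    · exact absurd h hu
  refine ⟨h1, ?_⟩
  have h2 : z₀ ^ 2 - (a + b) * z₀ + b * a = (z₀ - a) * z₀ - b * (z₀ - a) := by
    noncomm_ring
  rw [h2, ← hb, sub_self]
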